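/- Let A be an abelian category with enough projectives and finite global dimension d, let T be a triangulated category, and F : T → A a homological functor with shift compatibility satisfying conditions (i) and (ii) as above (projective-detecting and projective-realizing). Then for any objects X, Y of T, the filtration of [X, Y] arising from the Adams spectral sequence E_2^{pq} = Ext^p_A(F(X), F(Y)[q]) ⇒ [X, Σ^{p+q}Y] has length at most d + 1; in particular if Ext^p_A(F(X), F(Y)[−p]) = 0 for all 0 ≤ p ≤ d, then [X, Y] = 0. -/

import Mathlib

/-!
STATEMENT 14: Adams spectral sequence vanishing.  Let `A` be an abelian category with enough
projectives and finite global dimension `d`, `T` a triangulated category and `F : T ⥤ A` a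
homological functor with a shift compatibility `F(ΣX) ≅ F(X)[1]` satisfying the
projective-detecting condition (i) and the projective-realizing condition (ii).  Then the
Adams spectral sequence `E₂^{pq} = Ext^p_A(F X, F Y [q]) ⇒ [X, Σ^{p+q} Y]` is bounded with at
most `d + 1` nonzero filtration layers; in particular, if `Ext^p_A(F X, (F Y)[−p]) = 0` for
all `0 ≤ p ≤ d`, then `[X, Y] = 0`.
-/

open CategoryTheory CategoryTheory.Limits CategoryTheory.Pretriangulated

/-- Projective dimension at most `n`, defined recursively via syzygies. -/
def projDimLE (A : Type*) [Category A] [Abelian A] : ℕ → A → Prop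
  | 0, X => Projective X
  | (n + 1), X => Projective X ∨
      ∃ (P : A) (p : P ⟶ X), Epi p ∧ Projective P ∧ projDimLE A n (kernel p)

/-- The `n`-fold power of the inverse `[-1]` of the autoequivalence `[1]` of `A`. -/
def invPow {A : Type*} [Category A] (e : A ≌ A) : ℕ → (A ⥤ A)
  | 0 => 𝟭 A
  | (n + 1) => invPow e n ⋙ e.inverse

set_option linter.unusedSectionVars false
set_option linter.dupNamespace false
set_option maxHeartbeats 1000000


open CategoryTheory CategoryTheory.Limits Opposite

noncomputable section
namespace AdamsAux
variable {A : Type*} [Category A] [Abelian A] [EnoughProjectives A]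

lemma subsingleton_of_iso {M N : ModuleCat ℤ} (i : M ≅ N) (h : Subsingleton N) :
    Subsingleton M :=
  Function.Injective.subsingleton ((ModuleCat.mono_iff_injective i.hom).1 inferInstance)

variable (S : ShortComplex A)

def gluedX (R : ProjectiveResolution S.X₁) : ℕ → A
  | 0 => S.X₂
  | (n + 1) => R.complex.X n

def gluedD (R : ProjectiveResolution S.X₁) : ∀ n : ℕ, gluedX S R (n + 1) ⟶ gluedX S R n
  | 0 => R.π.f 0 ≫ S.f
  | (n + 1) => R.complex.d (n + 1) n

def gluedComplex (R : ProjectiveResolution S.X₁) : ChainComplex A ℕ :=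
  ChainComplex.of (gluedX S R) (gluedD S R) (by
    rintro (_ | n)
    · show R.complex.d 1 0 ≫ (R.π.f 0 ≫ S.f) = 0
      exact (R.complex_d_comp_π_f_zero_assoc _).trans zero_comp
    · show R.complex.d (n + 2) (n + 1) ≫ R.complex.d (n + 1) n = 0
      simp)

lemma gluedComplex_d_one_zero (R : ProjectiveResolution S.X₁) :
    (gluedComplex S R).d 1 0 = R.π.f 0 ≫ S.f :=
  ChainComplex.of_d (gluedX S R) (gluedD S R) 0

lemma gluedComplex_d_succ (R : ProjectiveResolution S.X₁) (n : ℕ) :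
    (gluedComplex S R).d (n + 2) (n + 1) = R.complex.d (n + 1) n :=
  ChainComplex.of_d (gluedX S R) (gluedD S R) (n + 1)

lemma glued_exact_one (hS : S.Exact) (R : ProjectiveResolution S.X₁) :
    (ShortComplex.mk (R.π.f 0 ≫ S.f) S.g
      (by exact (Category.assoc _ _ _).trans ((congrArg _ S.zero).trans comp_zero))).Exact := by
  let φ : ShortComplex.mk (R.π.f 0 ≫ S.f) S.g (by exact (Category.assoc _ _ _).trans ((congrArg _ S.zero).trans comp_zero)) ⟶ S :=
    { τ₁ := R.π.f 0
      τ₂ := 𝟙 _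
      τ₃ := 𝟙 _ }
  have : Epi φ.τ₁ := by dsimp [φ]; exact (inferInstance : Epi (R.π.f 0))
  have : IsIso φ.τ₂ := by dsimp [φ]; infer_instance
  have : Mono φ.τ₃ := by dsimp [φ]; infer_instance
  rw [ShortComplex.exact_iff_of_epi_of_isIso_of_mono φ]
  exact hS

lemma glued_exactAt_succ (hS : S.Exact) [Mono S.f] (R : ProjectiveResolution S.X₁) (n : ℕ) :
    (gluedComplex S R).ExactAt (n + 1) := by
  rw [HomologicalComplex.exactAt_iff' _ (n + 2) (n + 1) n (by simp) (by simp)]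
  dsimp [HomologicalComplex.sc', HomologicalComplex.shortComplexFunctor']
  match n with
  | 0 =>
    rw [ShortComplex.exact_iff_of_iso (ShortComplex.isoMk (Iso.refl _) (Iso.refl _) (Iso.refl _)
      (by dsimp; exact (Category.id_comp _).trans ((gluedComplex_d_succ S R _).symm.trans (Category.comp_id _).symm))
      (by dsimp; exact (Category.id_comp _).trans ((gluedComplex_d_one_zero S R).symm.trans (Category.comp_id _).symm)) :
      (ShortComplex.mk ((gluedComplex S R).d (0 + 2) (0 + 1)) ((gluedComplex S R).d (0 + 1) 0)
        (HomologicalComplex.d_comp_d _ _ _ _)) ≅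
      (ShortComplex.mk (R.complex.d 1 0) (R.π.f 0 ≫ S.f)
        (by exact (R.complex_d_comp_π_f_zero_assoc _).trans zero_comp)))]
    let φ : ShortComplex.mk (R.complex.d 1 0) (R.π.f 0)
          (R.complex_d_comp_π_f_zero) ⟶
        ShortComplex.mk (R.complex.d 1 0) (R.π.f 0 ≫ S.f)
          (by exact (R.complex_d_comp_π_f_zero_assoc _).trans zero_comp) :=
      { τ₁ := 𝟙 _
        τ₂ := 𝟙 _
        τ₃ := S.f }
    have : Epi φ.τ₁ := by dsimp [φ]; infer_instance
    have : IsIso φ.τ₂ := by dsimp [φ]; infer_instance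
    have : Mono φ.τ₃ := by dsimp [φ]; infer_instance
    rw [← ShortComplex.exact_iff_of_epi_of_isIso_of_mono φ]
    exact R.exact₀
  | n + 1 =>
    rw [ShortComplex.exact_iff_of_iso (ShortComplex.isoMk (Iso.refl _) (Iso.refl _) (Iso.refl _)
      (by dsimp; exact (Category.id_comp _).trans ((gluedComplex_d_succ S R _).symm.trans (Category.comp_id _).symm))
      (by dsimp; exact (Category.id_comp _).trans ((gluedComplex_d_succ S R _).symm.trans (Category.comp_id _).symm)) :
      (ShortComplex.mk ((gluedComplex S R).d (n + 1 + 2) (n + 1 + 1))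
        ((gluedComplex S R).d (n + 1 + 1) (n + 1)) (HomologicalComplex.d_comp_d _ _ _ _)) ≅
      (ShortComplex.mk (R.complex.d (n + 2) (n + 1)) (R.complex.d (n + 1) n)
        (HomologicalComplex.d_comp_d _ _ _ _)))]
    exact R.exact_succ n

/-- The glued projective resolution of `S.X₃`. -/
def gluedRes (hS : S.Exact) [Mono S.f] [Epi S.g] (hP : Projective S.X₂)
    (R : ProjectiveResolution S.X₁) : ProjectiveResolution S.X₃ where
  complex := gluedComplex S R
  projective n := by
    cases n with
    | zero => exact hP
    | succ n => exact R.projective n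
  π := (ChainComplex.toSingle₀Equiv _ _).symm ⟨S.g, by
    exact (congrArg (· ≫ S.g) (gluedComplex_d_one_zero S R)).trans ((Category.assoc _ _ _).trans ((congrArg _ S.zero).trans comp_zero))⟩
  quasiIso := ⟨fun n => by
    cases n with
    | zero =>
      rw [ChainComplex.quasiIsoAt₀_iff, ShortComplex.quasiIso_iff_of_zeros']
      · refine (ShortComplex.exact_and_epi_g_iff_of_iso ?_).1
          ⟨glued_exact_one S hS R, inferInstance⟩
        refine ShortComplex.isoMk (Iso.refl _) (Iso.refl _) (Iso.refl _) ?_ ?_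
        · dsimp
          exact (Category.id_comp _).trans ((gluedComplex_d_one_zero S R).trans (Category.comp_id _).symm)
        · dsimp
          exact (Category.id_comp _).trans
            ((ChainComplex.toSingle₀Equiv_symm_apply_f_zero _ _).trans (Category.comp_id _).symm)
      all_goals rfl
    | succ n =>
      rw [quasiIsoAt_iff_exactAt' _ _ (ChainComplex.exactAt_succ_single_obj _ _)]
      exact glued_exactAt_succ S hS R n⟩


noncomputable section
open CategoryTheory CategoryTheory.Limits Opposite
variable {A : Type*} [Category A] [Abelian A] [EnoughProjectives A]

lemma exactAt_of_subsingleton {X₀ : A} (R : ProjectiveResolution X₀) (M : A) (i : ℕ)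
    (h : Subsingleton (((Ext ℤ A i).obj (op X₀)).obj M)) :
    (R.complex.linearYonedaObj ℤ M).ExactAt i := by
  rw [HomologicalComplex.exactAt_iff_isZero_homology]
  haveI := subsingleton_of_iso (R.isoExt i M).symm h
  exact ModuleCat.isZero_of_subsingleton _

lemma hom_eq_zero_of_ext0 {X₀ M : A}
    (h : Subsingleton (((Ext ℤ A 0).obj (op X₀)).obj M)) (φ : X₀ ⟶ M) : φ = 0 := by
  obtain ⟨R⟩ := (HasProjectiveResolution.out (Z := X₀))
  have hex := exactAt_of_subsingleton R M 0 h
  rw [HomologicalComplex.exactAt_iff' _ 0 0 1 (CochainComplex.prev_nat_zero)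
    (CochainComplex.next _ 0)] at hex
  rw [ShortComplex.moduleCat_exact_iff] at hex
  obtain ⟨y, hy⟩ := hex (R.π.f 0 ≫ φ) (by
    show ((R.complex.linearYonedaObj ℤ M).d 0 1) (R.π.f 0 ≫ φ) = 0
    simp only [ChainComplex.linearYonedaObj_d]
    show R.complex.d 1 0 ≫ R.π.f 0 ≫ φ = 0
    exact (R.complex_d_comp_π_f_zero_assoc _).trans zero_comp)
  have h0 : (R.complex.linearYonedaObj ℤ M).d 0 0 = 0 :=
    HomologicalComplex.shape _ 0 0 (by simp)
  have : R.π.f 0 ≫ φ = 0 := by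
    rw [← hy]
    show ((R.complex.linearYonedaObj ℤ M).d 0 0) y = 0
    rw [h0]
    rfl
  exact zero_of_epi_comp (R.π.f 0) this

end

noncomputable section
open CategoryTheory CategoryTheory.Limits Opposite
variable {A : Type*} [Category A] [Abelian A] [EnoughProjectives A]

lemma ext1_lift (S : ShortComplex A) (hS : S.Exact) [Mono S.f] [Epi S.g]
    (hP : Projective S.X₂) {M : A}
    (h : Subsingleton (((Ext ℤ A 1).obj (op S.X₃)).obj M)) (φ : S.X₁ ⟶ M) :
    ∃ ψ : S.X₂ ⟶ M, S.f ≫ ψ = φ := by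
  obtain ⟨R⟩ := (HasProjectiveResolution.out (Z := S.X₁))
  let glu := gluedRes S hS hP R
  have hex := exactAt_of_subsingleton glu M 1 h
  rw [HomologicalComplex.exactAt_iff' _ 0 1 2 (CochainComplex.prev_nat_succ 0)
    (CochainComplex.next _ 1)] at hex
  rw [ShortComplex.moduleCat_exact_iff] at hex
  obtain ⟨y, hy⟩ := hex (show (gluedComplex S R).X 1 ⟶ M from R.π.f 0 ≫ φ) (by
    show ((glu.complex.linearYonedaObj ℤ M).d 1 2)
      (show (gluedComplex S R).X 1 ⟶ M from R.π.f 0 ≫ φ) = 0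
    simp only [ChainComplex.linearYonedaObj_d]
    show (gluedComplex S R).d 2 1 ≫ (show (gluedComplex S R).X 1 ⟶ M from R.π.f 0 ≫ φ) = 0
    rw [gluedComplex_d_succ]
    show R.complex.d 1 0 ≫ R.π.f 0 ≫ φ = 0
    exact (R.complex_d_comp_π_f_zero_assoc _).trans zero_comp)
  refine ⟨y, ?_⟩
  have h1 : (gluedComplex S R).d 1 0 ≫ (y : S.X₂ ⟶ M) =
      (show (gluedComplex S R).X 1 ⟶ M from R.π.f 0 ≫ φ) := by
    rw [← hy]
    show ((glu.complex.linearYonedaObj ℤ M).d 0 1) y = _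
    simp only [ChainComplex.linearYonedaObj_d]
    rfl
  rw [gluedComplex_d_one_zero] at h1
  have h2 : R.π.f 0 ≫ S.f ≫ (y : S.X₂ ⟶ M) = R.π.f 0 ≫ φ := by
    exact (Category.assoc _ _ _).symm.trans h1
  exact (cancel_epi (R.π.f 0)).1 h2

lemma ext_subsingleton_shift (S : ShortComplex A) (hS : S.Exact) [Mono S.f] [Epi S.g]
    (hP : Projective S.X₂) {M : A} (q : ℕ)
    (h : Subsingleton (((Ext ℤ A (q + 2)).obj (op S.X₃)).obj M)) :
    Subsingleton (((Ext ℤ A (q + 1)).obj (op S.X₁)).obj M) := by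
  obtain ⟨R⟩ := (HasProjectiveResolution.out (Z := S.X₁))
  let glu := gluedRes S hS hP R
  refine subsingleton_of_iso (R.isoExt (q + 1) M ≪≫ ?_ ≪≫ (glu.isoExt (q + 2) M).symm) h
  refine ShortComplex.homologyMapIso
    (((R.complex.linearYonedaObj ℤ M).isoSc' q (q + 1) (q + 2)
        (CochainComplex.prev_nat_succ q) (CochainComplex.next _ _)) ≪≫ ?_ ≪≫
      ((glu.complex.linearYonedaObj ℤ M).isoSc' (q + 1) (q + 2) (q + 3)
        (CochainComplex.prev_nat_succ _) (CochainComplex.next _ _)).symm)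
  refine ShortComplex.isoMk (Iso.refl _) (Iso.refl _) (Iso.refl _) ?_ ?_
  · dsimp
    refine (Category.id_comp _).trans (Eq.trans ?_ (Category.comp_id _).symm)
    show ((glu.complex.linearYonedaObj ℤ M).d (q + 1) (q + 2)) = _
    simp only [ChainComplex.linearYonedaObj_d]
    show ModuleCat.ofHom (Linear.leftComp ℤ M ((gluedComplex S R).d (q + 2) (q + 1))) = _
    rw [gluedComplex_d_succ]
    rfl
  · dsimp
    refine (Category.id_comp _).trans (Eq.trans ?_ (Category.comp_id _).symm)
    show ((glu.complex.linearYonedaObj ℤ M).d (q + 2) (q + 3)) = _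
    simp only [ChainComplex.linearYonedaObj_d]
    show ModuleCat.ofHom (Linear.leftComp ℤ M ((gluedComplex S R).d (q + 3) (q + 2))) = _
    rw [gluedComplex_d_succ]
    rfl

end
noncomputable section
open Opposite

variable {A : Type*} [Category A] [Abelian A]

lemma projDimLE_of_iso : ∀ (n : ℕ) {X Y : A}, (X ≅ Y) → projDimLE A n X → projDimLE A n Y := by
  intro n
  induction n with
  | zero =>
    intro X Y i h
    exact Projective.of_iso i h
  | succ n ih =>
    intro X Y i h
    rcases h with h | ⟨P, p, hp, hP, hK⟩
    · exact Or.inl (Projective.of_iso i h)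
    · refine Or.inr ⟨P, p ≫ i.hom, epi_comp _ _, hP, ?_⟩
      exact ih (kernelCompMono p i.hom).symm hK

def invPowSuccIso (e : A ≌ A) : ∀ p : ℕ, (e.inverse ⋙ invPow e p) ≅ invPow e (p + 1)
  | 0 => Functor.rightUnitor _ ≪≫ (Functor.leftUnitor _).symm
  | (p + 1) => Functor.isoWhiskerRight (invPowSuccIso e p) e.inverse

section Triangulated

variable {T : Type*} [Category T] [HasZeroObject T] [Preadditive T] [HasShift T ℤ]
  [∀ n : ℤ, (shiftFunctor T n).Additive] [Pretriangulated T]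
  (F : T ⥤ A) [F.IsHomological] (e : A ≌ A)
  (compat : shiftFunctor T (1 : ℤ) ⋙ F ≅ F ⋙ e.functor)

include compat in
lemma map_shift_neg_zero {Z₁ Z₂ : T} (k : Z₁ ⟶ Z₂) (hk : F.map k = 0) :
    F.map (k⟦(-1 : ℤ)⟧') = 0 := by
  have h1 : (k⟦(-1 : ℤ)⟧')⟦(1 : ℤ)⟧' =
      (shiftFunctorCompIsoId T (-1 : ℤ) (1 : ℤ) (by ring)).hom.app Z₁ ≫ k ≫
        (shiftFunctorCompIsoId T (-1 : ℤ) (1 : ℤ) (by ring)).inv.app Z₂ := by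
    have h0 := NatTrans.naturality (shiftFunctorCompIsoId T (-1 : ℤ) (1 : ℤ) (by ring)).hom k
    dsimp at h0 ⊢
    rw [← Category.assoc, ← h0, Category.assoc, Iso.hom_inv_id_app]
    simp
  have h2 : F.map ((k⟦(-1 : ℤ)⟧')⟦(1 : ℤ)⟧') = 0 := by
    rw [h1, F.map_comp, F.map_comp, hk, zero_comp, comp_zero]
  have h3 := NatTrans.naturality compat.hom (k⟦(-1 : ℤ)⟧')
  dsimp at h3
  rw [h2, zero_comp] at h3
  have h4 : e.functor.map (F.map (k⟦(-1 : ℤ)⟧')) = 0 := by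
    rw [← cancel_epi (compat.hom.app (Z₁⟦(-1 : ℤ)⟧)), ← h3, comp_zero]
  exact e.functor.map_injective (by rw [h4, Functor.map_zero])


def FshiftNegIso (Y : T) : F.obj (Y⟦(-1 : ℤ)⟧) ≅ e.inverse.obj (F.obj Y) :=
  e.unitIso.app (F.obj (Y⟦(-1 : ℤ)⟧)) ≪≫
    e.inverse.mapIso ((compat.app (Y⟦(-1 : ℤ)⟧)).symm ≪≫
      F.mapIso ((shiftFunctorCompIsoId T (-1 : ℤ) (1 : ℤ) (by ring)).app Y))

variable [EnoughProjectives A]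

open Opposite in
include compat in
lemma main_induction
    (hi : ∀ (C X : T), Projective (F.obj C) →
      Function.Bijective (fun g : C ⟶ X => F.map g))
    (hii : ∀ P : A, Projective P → ∃ G : T, Nonempty (F.obj G ≅ P)) :
    ∀ (n : ℕ) (X Y : T) (g : X ⟶ Y), projDimLE A n (F.obj X) → F.map g = 0 →
      (∀ p : ℕ, 1 ≤ p → p ≤ n →
        Subsingleton (((Ext ℤ A p).obj (op (F.obj X))).obj ((invPow e p).obj (F.obj Y)))) →
      g = 0 := by
  have hproj : ∀ (X Y : T) (g : X ⟶ Y), Projective (F.obj X) → F.map g = 0 → g = 0 := by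
    intro X Y g hp hg
    exact (hi X Y hp).1 (show F.map g = F.map 0 by rw [hg, Functor.map_zero])
  intro n
  induction n with
  | zero =>
    intro X Y g hdim hg _
    exact hproj X Y g hdim hg
  | succ n ih =>
    intro X Y g hdim hg hext
    rcases hdim with hp | ⟨P, p, hpepi, hP, hK⟩
    · exact hproj X Y g hp hg
    obtain ⟨G, ⟨ι⟩⟩ := hii P hP
    have hFG : Projective (F.obj G) := Projective.of_iso ι.symm hP
    obtain ⟨f, hf0⟩ := (hi G X hFG).2 (ι.hom ≫ p)
    have hf : F.map f = ι.hom ≫ p := hf0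
    have hepi : Epi (F.map f) := by rw [hf]; exact epi_comp _ _
    obtain ⟨W, w, δ, hT⟩ := distinguished_cocone_triangle₁ f
    -- F δ = 0
    have hfδ : f ≫ δ = 0 := comp_distTriang_mor_zero₂₃ _ hT
    have hFδ : F.map δ = 0 := by
      have h1 : F.map f ≫ F.map δ = 0 := by rw [← F.map_comp, hfδ, Functor.map_zero]
      exact (cancel_epi (F.map f)).1 (by rw [h1, comp_zero])
    -- exactness of F on the triangle
    have hS₁ := F.map_distinguished_exact _ hT
    set SF := (shortComplexOfDistTriangle (Triangle.mk w f δ) hT).map F with hSF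
    -- Mono (F.map w)
    have hT' := inv_rot_of_distTriang _ hT
    have hS₂ := F.map_distinguished_exact _ hT'
    have hzero₂ : ((shortComplexOfDistTriangle _ hT').map F).f = 0 := by
      show F.map ((Triangle.mk w f δ).invRotate.mor₁) = 0
      have hr : (Triangle.mk w f δ).invRotate.mor₁ =
          -((δ⟦(-1 : ℤ)⟧') ≫ (shiftFunctorCompIsoId T (1 : ℤ) (-1 : ℤ) (by ring)).hom.app W) :=
        rfl
      rw [hr]; exact F.map_neg.trans ((congrArg Neg.neg ((F.map_comp _ _).trans
          ((congrArg (fun x => x ≫ F.map ((shiftFunctorCompIsoId T (1 : ℤ) (-1 : ℤ) (by ring)).hom.app W))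
            (map_shift_neg_zero F e compat δ hFδ)).trans zero_comp))).trans neg_zero)
    have hmono : Mono (F.map w) := hS₂.mono_g hzero₂
    haveI : Mono SF.f := hmono
    haveI : Epi SF.g := hepi
    -- g factors through δ
    have hfg : f ≫ g = 0 := (hi G Y hFG).1
      (show F.map (f ≫ g) = F.map 0 by
        rw [F.map_comp, hg, comp_zero, Functor.map_zero])
    obtain ⟨g'0, hg'0⟩ := Triangle.yoneda_exact₃ _ hT g hfg
    let g' : (W⟦(1 : ℤ)⟧) ⟶ Y := g'0
    have hg' : g = δ ≫ g' := hg'0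
    -- the corrected lift
    let θ : e.functor.obj (F.obj W) ⟶ F.obj Y := (compat.app W).inv ≫ F.map g'
    let φ : F.obj W ⟶ (invPow e 1).obj (F.obj Y) :=
      e.unit.app (F.obj W) ≫ e.inverse.map θ
    obtain ⟨ψ, hψ⟩ := ext1_lift SF hS₁ hFG
      (hext 1 le_rfl (Nat.succ_le_succ (Nat.zero_le n))) φ
    have hψ' : F.map w ≫ ψ = φ := hψ
    let ψt : F.obj (G⟦(1 : ℤ)⟧) ⟶ F.obj Y :=
      (compat.app G).hom ≫ e.functor.map ψ ≫ e.counit.app (F.obj Y)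
    have hFG1 : Projective (F.obj (G⟦(1 : ℤ)⟧)) :=
      Projective.of_iso (compat.app G).symm (e.toAdjunction.map_projective _ hFG)
    obtain ⟨s, hs0⟩ := (hi (G⟦(1 : ℤ)⟧) Y hFG1).2 ψt
    have hs : F.map s = ψt := hs0
    let g'' : (W⟦(1 : ℤ)⟧) ⟶ Y := g' - w⟦(1 : ℤ)⟧' ≫ s
    have hδg'' : δ ≫ g'' = g := by
      have hz : δ ≫ w⟦(1 : ℤ)⟧' = 0 := comp_distTriang_mor_zero₃₁ _ hT
      rw [show g'' = g' - w⟦(1 : ℤ)⟧' ≫ s from rfl, Preadditive.comp_sub, ← Category.assoc, hz, zero_comp,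
        sub_zero, ← hg']
    have hFg'' : F.map g'' = 0 := by
      have hnat : F.map (w⟦(1 : ℤ)⟧') ≫ (compat.app G).hom =
          (compat.app W).hom ≫ e.functor.map (F.map w) := NatTrans.naturality compat.hom w
      have htri : e.functor.map φ ≫ e.counit.app (F.obj Y) = θ := by
        have hnat2 := e.counit.naturality θ
        dsimp at hnat2
        exact (congrArg (· ≫ e.counit.app (F.obj Y))
          (e.functor.map_comp (e.unit.app (F.obj W)) (e.inverse.map θ))).trans
          ((Category.assoc _ _ _).trans ((congrArg (e.functor.map (e.unit.app (F.obj W)) ≫ ·)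
            hnat2).trans ((Category.assoc _ _ _).symm.trans
            ((congrArg (· ≫ θ) (e.functor_unit_comp (F.obj W))).trans (Category.id_comp _)))))
      have : F.map (w⟦(1 : ℤ)⟧') ≫ ψt = F.map g' := by
        rw [show ψt = (compat.app G).hom ≫ e.functor.map ψ ≫ e.counit.app (F.obj Y) from rfl,
          ← Category.assoc, hnat, Category.assoc]
        have h5 : e.functor.map (F.map w) ≫ e.functor.map ψ ≫ e.counit.app (F.obj Y) = θ :=
          (Category.assoc _ _ _).symm.trans ((congrArg (· ≫ e.counit.app (F.obj Y))
            ((e.functor.map_comp (F.map w) ψ).symm.trans (congrArg e.functor.map hψ'))).trans htri)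
        exact (congrArg ((compat.app W).hom ≫ ·) h5).trans
          ((Category.assoc (compat.app W).hom (compat.app W).inv (F.map g')).symm.trans
            ((congrArg (· ≫ F.map g') (Iso.hom_inv_id _)).trans (Category.id_comp _)))
      rw [show g'' = g' - w⟦(1 : ℤ)⟧' ≫ s from rfl, F.map_sub, F.map_comp, hs, this, sub_self]
    -- pass to the next stage
    let α := (shiftFunctorCompIsoId T (1 : ℤ) (-1 : ℤ) (by ring)).app W
    let g₁ : W ⟶ (Y⟦(-1 : ℤ)⟧) := α.inv ≫ g''⟦(-1 : ℤ)⟧'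
    have hFg₁ : F.map g₁ = 0 := by
      rw [show g₁ = α.inv ≫ g''⟦(-1 : ℤ)⟧' from rfl, F.map_comp,
        map_shift_neg_zero F e compat g'' hFg'', comp_zero]
    -- projective dimension of F W
    have hdimW : projDimLE A n (F.obj W) := by
      have i1 : kernel p ≅ kernel (F.map f) :=
        (kernelIsIsoComp ι.hom p).symm ≪≫ kernelIsoOfEq hf.symm
      have i2 : kernel (F.map f) ≅ F.obj W :=
        IsLimit.conePointUniqueUpToIso (kernelIsKernel (F.map f)) hS₁.fIsKernel
      exact projDimLE_of_iso n (i1 ≪≫ i2) hK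
    -- Ext hypotheses for the next stage
    have hextW : ∀ p' : ℕ, 1 ≤ p' → p' ≤ n →
        Subsingleton (((Ext ℤ A p').obj (op (F.obj W))).obj
          ((invPow e p').obj (F.obj (Y⟦(-1 : ℤ)⟧)))) := by
      intro q h1 hq
      obtain ⟨q, rfl⟩ : ∃ q', q = q' + 1 := ⟨q - 1, by omega⟩
      have h2 := hext (q + 2) (by omega) (by omega)
      have h3 := ext_subsingleton_shift SF hS₁ hFG q h2
      refine subsingleton_of_iso
        (((Ext ℤ A (q + 1)).obj (op (F.obj W))).mapIso ?_) h3
      exact ((invPow e (q + 1)).mapIso (FshiftNegIso F e compat Y)) ≪≫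
        ((invPowSuccIso e (q + 1)).app (F.obj Y))
    have hg₁ := ih W (Y⟦(-1 : ℤ)⟧) g₁ hdimW hFg₁ hextW
    -- conclude
    have hgs : g''⟦(-1 : ℤ)⟧' = 0 := by
      have := hg₁
      rw [show g₁ = α.inv ≫ g''⟦(-1 : ℤ)⟧' from rfl] at this
      rw [← cancel_epi α.inv, this, comp_zero]
    have hg''0 : g'' = 0 :=
      (shiftFunctor T (-1 : ℤ)).map_injective (by rw [hgs, Functor.map_zero])
    rw [← hδg'', hg''0, comp_zero]

end Triangulated
end


end AdamsAux
end

theorem adams_ext_vanishing_implies_zero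
    {T A : Type*} [Category T] [Category A]
    [HasZeroObject T] [Preadditive T] [HasShift T ℤ]
    [∀ n : ℤ, (shiftFunctor T n).Additive] [Pretriangulated T]
    [Abelian A] [EnoughProjectives A]
    (d : ℕ) (hgl : ∀ X : A, projDimLE A d X)
    (F : T ⥤ A) [F.IsHomological]
    (e : A ≌ A) (compat : shiftFunctor T (1 : ℤ) ⋙ F ≅ F ⋙ e.functor)
    (hi : ∀ (C X : T), Projective (F.obj C) →
      Function.Bijective (fun g : C ⟶ X => F.map g))
    (hii : ∀ P : A, Projective P → ∃ G : T, Nonempty (F.obj G ≅ P))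
    (X Y : T)
    (hvanish : ∀ p : ℕ, p ≤ d →
      Subsingleton (((_root_.Ext ℤ A p).obj (Opposite.op (F.obj X))).obj
        ((invPow e p).obj (F.obj Y)))) :
    ∀ g : X ⟶ Y, g = 0 := by
  intro g
  have h0 : F.map g = 0 :=
    AdamsAux.hom_eq_zero_of_ext0 (hvanish 0 (Nat.zero_le d)) (F.map g)
  exact AdamsAux.main_induction F e compat hi hii d X Y g (hgl (F.obj X)) h0
    (fun p _ hp => hvanish p hp)
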